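/- If ⟨h,s⟩ ⊨_R {φ; (x+ι ↦_mut e') ∗ P'} where e' is an expression mentioning only stack variables, then ⟨h[(⟦x⟧ₛ+ι) ↦ ⟦e⟧ₛ], s⟩ ⊨_R {φ; (x+ι ↦_mut e) ∗ P'} (soundness of the Write rule's heap transformation). -/

import Mathlib

/-- Locations and values are natural numbers. -/
abbrev Loc := ℕ
abbrev Val := ℕ
/-- Heaps: partial maps from locations to values. -/
abbrev Heap := Loc → Option Val
/-- Stacks: maps from variables to values. -/
abbrev Stack := String → Val

/-- Domain of a heap. -/
def Heap.dom (h : Heap) : Set Loc := {l | h l ≠ none}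

/-- Disjointness of heaps. -/
def Heap.Disj (h₁ h₂ : Heap) : Prop := ∀ l, h₁ l = none ∨ h₂ l = none

/-- Disjoint union of heaps. -/
def Heap.union (h₁ h₂ : Heap) : Heap :=
  fun l => match h₁ l with
    | some v => some v
    | none => h₂ l

/-- Pointwise heap update. -/
def Heap.update (h : Heap) (l : Loc) (v : Val) : Heap :=
  fun l' => if l' = l then some v else h l'

/-- Permission annotations. -/
inductive Perm where
  | mut : Perm
  | imm : Perm
deriving DecidableEq

/-- Expressions. -/
inductive Expr where
  | lit : ℕ → Expr
  | var : String → Expr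
  | eq  : Expr → Expr → Expr
  | and : Expr → Expr → Expr
  | not : Expr → Expr

/-- Expression evaluation (booleans coded as 1/0). -/
def Expr.eval (s : Stack) : Expr → ℕ
  | .lit n => n
  | .var x => s x
  | .eq e₁ e₂ => if e₁.eval s = e₂.eval s then 1 else 0
  | .and e₁ e₂ => if e₁.eval s = 1 then (if e₂.eval s = 1 then 1 else 0) else 0
  | .not e => if e.eval s = 1 then 0 else 1

/-- Variables occurring in an expression. -/
def Expr.vars : Expr → Set String
  | .lit _ => ∅
  | .var x => {x}
  | .eq e₁ e₂ => e₁.vars ∪ e₂.vars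
  | .and e₁ e₂ => e₁.vars ∪ e₂.vars
  | .not e => e.vars

/-- Symbolic heaps. -/
inductive SymHeap where
  | emp : SymHeap
  | pts : Expr → ℕ → Perm → Expr → SymHeap   -- e₁ + ι ↦ₐ e₂
  | blk : Expr → ℕ → Perm → SymHeap          -- [e]ₙ with permission a
  | star : SymHeap → SymHeap → SymHeap

/-- Variables occurring in a symbolic heap. -/
def SymHeap.vars : SymHeap → Set String
  | .emp => ∅
  | .pts e₁ _ _ e₂ => e₁.vars ∪ e₂.vars
  | .blk e _ _ => e.vars
  | .star P Q => P.vars ∪ Q.vars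

/-- Satisfaction ⟨h,s⟩ ⊨_R {φ; P}, parameterized by the block-metadata map `bl`
and the fixed set `R` of read-only locations. -/
def Sat (bl : Loc → Loc) (R : Set Loc) (h : Heap) (s : Stack) (φ : Expr) :
    SymHeap → Prop
  | .emp => φ.eval s = 1 ∧ ∀ l, h l = none
  | .pts e₁ ι a e₂ =>
      φ.eval s = 1 ∧
      h.dom = {e₁.eval s + ι} ∧
      h (e₁.eval s + ι) = some (e₂.eval s) ∧
      (e₁.eval s + ι ∈ R ↔ a = .imm)
  | .blk e n a =>
      φ.eval s = 1 ∧
      h.dom = {bl (e.eval s)} ∧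
      h (bl (e.eval s)) = some n ∧
      (bl (e.eval s) ∈ R ↔ a = .imm)
  | .star P Q =>
      ∃ h₁ h₂, h₁.Disj h₂ ∧ h = h₁.union h₂ ∧
        Sat bl R h₁ s φ P ∧ Sat bl R h₂ s φ Q

/-- Iterated separating conjunction of a list of symbolic heaps. -/
def iterStar (Ps : List SymHeap) : SymHeap := Ps.foldr SymHeap.star SymHeap.emp

theorem write_rule_sound (bl : Loc → Loc) (R : Set Loc) (h : Heap)
    (s : Stack) (φ x e e' : Expr) (ι : ℕ) (P' : SymHeap)
    (hsat : Sat bl R h s φ (.star (.pts x ι .mut e') P')) :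
    Sat bl R (h.update (x.eval s + ι) (e.eval s)) s φ
      (.star (.pts x ι .mut e) P') := by
  obtain ⟨h₁, h₂, hdisj, heq, ⟨hφ, hdom, hval, hR⟩, hP'⟩ := hsat
  set l := x.eval s + ι with hl
  refine ⟨h₁.update l (e.eval s), h₂, ?_, ?_, ⟨hφ, ?_, ?_, hR⟩, hP'⟩
  · intro l'
    rcases hdisj l' with h0 | h0
    · by_cases hc : l' = l
      · right
        subst hc
        rcases hdisj l with h0 | h0
        · exfalso
          have : l ∈ h₁.dom := by rw [hdom]; rfl
          exact this h0
        · exact h0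
      · left; simp [Heap.update, hc, h0]
    · right; exact h0
  · funext l'
    by_cases hc : l' = l
    · subst hc
      have h2n : h₂ l = none := by
        rcases hdisj l with h0 | h0
        · exfalso
          have : l ∈ h₁.dom := by rw [hdom]; rfl
          exact this h0
        · exact h0
      simp [Heap.update, Heap.union, heq, h2n]
    · simp [Heap.update, Heap.union, hc, heq]
  · ext l'
    by_cases hc : l' = l
    · simp [Heap.dom, Heap.update, hc, ← hl]
    · have : (l' ∈ h₁.dom) ↔ l' ∈ ({l} : Set Loc) := by rw [hdom]
      simp only [Set.mem_singleton_iff, hc, iff_false] at this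
      simp [Heap.dom, Heap.update, hc]
      simpa [Heap.dom, ← hl, hc] using this
  · simp [Heap.update, ← hl]
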